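/- Cauchy–Schwarz product bound on the leading remainder term: writing ‖g‖ = (E_P[g(X)²])^{1/2} for measurable g : 𝒳 → ℝ, one has |E_P[(π_F(a|X)/F(A=a))·(π_P(a'|X)/π_F(a'|X) − π_P(a|X)/π_F(a|X))·(μ_F(X) − μ_P(X))]| ≤ (1/(ε·F(A=a)))·(‖π_P(a'|·) − π_F(a'|·)‖ + ‖π_P(a|·) − π_F(a|·)‖)·‖μ_F − μ_P‖. In particular, the leading term of the remainder is bounded by a constant times the product of the L²(P) estimation errors of the propensity scores and of the outcome regression. -/

import Mathlib

open MeasureTheory ProbabilityTheory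

lemma cs_aux {Ω : Type*} [MeasurableSpace Ω] (P : Measure Ω) [IsProbabilityMeasure P]
    {u w : Ω → ℝ} (hu : Measurable u) (hw : Measurable w)
    (hub : ∀ ω, |u ω| ≤ 2) (hwb : ∀ ω, |w ω| ≤ 2) :
    ∫ ω, |u ω| * |w ω| ∂P ≤ Real.sqrt (∫ ω, u ω ^ 2 ∂P) * Real.sqrt (∫ ω, w ω ^ 2 ∂P) := by
  have hpq : (2 : ℝ).HolderConjugate 2 := Real.HolderConjugate.two_two
  have hmu : MemLp (fun ω => |u ω|) (ENNReal.ofReal 2) P :=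
    MemLp.of_bound hu.abs.aestronglyMeasurable 2
      (Filter.Eventually.of_forall fun ω => by simpa [abs_abs] using hub ω)
  have hmw : MemLp (fun ω => |w ω|) (ENNReal.ofReal 2) P :=
    MemLp.of_bound hw.abs.aestronglyMeasurable 2
      (Filter.Eventually.of_forall fun ω => by simpa [abs_abs] using hwb ω)
  have h := integral_mul_le_Lp_mul_Lq_of_nonneg (μ := P) hpq
    (Filter.Eventually.of_forall fun ω => abs_nonneg (u ω))
    (Filter.Eventually.of_forall fun ω => abs_nonneg (w ω)) hmu hmw
  have e1 : ∀ (f : Ω → ℝ), (∫ ω, |f ω| ^ (2 : ℝ) ∂P) = ∫ ω, f ω ^ 2 ∂P := by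
    intro f
    refine integral_congr_ae (Filter.Eventually.of_forall fun ω => ?_)
    show |f ω| ^ (2:ℝ) = f ω ^ 2
    rw [show ((2:ℝ)) = ((2:ℕ):ℝ) by norm_num, Real.rpow_natCast, sq_abs]
  have nn : ∀ (f : Ω → ℝ), 0 ≤ ∫ ω, f ω ^ 2 ∂P := fun f =>
    integral_nonneg fun ω => sq_nonneg _
  calc ∫ ω, |u ω| * |w ω| ∂P
      ≤ (∫ ω, |u ω| ^ (2:ℝ) ∂P) ^ ((1:ℝ)/2) * (∫ ω, |w ω| ^ (2:ℝ) ∂P) ^ ((1:ℝ)/2) := h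
    _ = Real.sqrt (∫ ω, u ω ^ 2 ∂P) * Real.sqrt (∫ ω, w ω ^ 2 ∂P) := by
        rw [e1, e1, Real.sqrt_eq_rpow, Real.sqrt_eq_rpow]


/-- Cauchy–Schwarz product bound on the leading remainder term: writing
`‖g‖ = (E_P[g(X)²])^{1/2}`, one has
`|E_P[(π_F(a|X)/F(A=a))·(π_P(a'|X)/π_F(a'|X) − π_P(a|X)/π_F(a|X))·(μ_F(X) − μ_P(X))]|`
`≤ (1/(ε·F(A=a)))·(‖π_P(a'|·) − π_F(a'|·)‖ + ‖π_P(a|·) − π_F(a|·)‖)·‖μ_F − μ_P‖`. -/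
theorem remainder_cauchy_schwarz_bound
    {Ω 𝒳 : Type*} [MeasurableSpace Ω] [StandardBorelSpace Ω]
    [MeasurableSpace 𝒳] [StandardBorelSpace 𝒳]
    (P F : Measure Ω) [IsProbabilityMeasure P] [IsProbabilityMeasure F]
    (m : ℕ) (hm : 1 ≤ m)
    (X : Ω → 𝒳) (A : Ω → Fin m) (Y : Ω → ℝ)
    (hX : Measurable X) (hA : Measurable A) (hY : Measurable Y)
    (hY01 : ∀ ω, 0 ≤ Y ω ∧ Y ω ≤ 1)
    (a a' : Fin m) (ε : ℝ) (hε : 0 < ε) (hε1 : ε ≤ 1)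
    (hPa : 0 < P {ω | A ω = a}) (hFa : 0 < F {ω | A ω = a})
    -- propensity scores under P and F, for b ∈ {a, a'}
    (πP πF : Fin m → 𝒳 → ℝ)
    (hπPmeas : ∀ b ∈ ({a, a'} : Set (Fin m)), Measurable (πP b))
    (hπPrange : ∀ b ∈ ({a, a'} : Set (Fin m)), ∀ x, ε ≤ πP b x ∧ πP b x ≤ 1)
    (hπP : ∀ b ∈ ({a, a'} : Set (Fin m)), (fun ω => πP b (X ω)) =ᵐ[P]
      P[fun ω => (if A ω = b then (1 : ℝ) else 0) | MeasurableSpace.comap X inferInstance])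
    (hπFmeas : ∀ b ∈ ({a, a'} : Set (Fin m)), Measurable (πF b))
    (hπFrange : ∀ b ∈ ({a, a'} : Set (Fin m)), ∀ x, ε ≤ πF b x ∧ πF b x ≤ 1)
    (hπF : ∀ b ∈ ({a, a'} : Set (Fin m)), (fun ω => πF b (X ω)) =ᵐ[F]
      F[fun ω => (if A ω = b then (1 : ℝ) else 0) | MeasurableSpace.comap X inferInstance])
    -- outcome regressions under P and F
    (μP μF : 𝒳 → ℝ)
    (hμPmeas : Measurable μP) (hμPrange : ∀ x, 0 ≤ μP x ∧ μP x ≤ 1)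
    (hμP : (fun ω => μP (X ω) * πP a' (X ω)) =ᵐ[P]
      P[fun ω => (if A ω = a' then (1 : ℝ) else 0) * Y ω | MeasurableSpace.comap X inferInstance])
    (hμFmeas : Measurable μF) (hμFrange : ∀ x, 0 ≤ μF x ∧ μF x ≤ 1)
    (hμF : (fun ω => μF (X ω) * πF a' (X ω)) =ᵐ[F]
      F[fun ω => (if A ω = a' then (1 : ℝ) else 0) * Y ω | MeasurableSpace.comap X inferInstance]) :
    |∫ ω, πF a (X ω) / (F {ω' | A ω' = a}).toReal
        * (πP a' (X ω) / πF a' (X ω) - πP a (X ω) / πF a (X ω))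
        * (μF (X ω) - μP (X ω)) ∂P|
      ≤ (1 / (ε * (F {ω | A ω = a}).toReal))
        * (Real.sqrt (∫ ω, (πP a' (X ω) - πF a' (X ω)) ^ 2 ∂P)
            + Real.sqrt (∫ ω, (πP a (X ω) - πF a (X ω)) ^ 2 ∂P))
        * Real.sqrt (∫ ω, (μF (X ω) - μP (X ω)) ^ 2 ∂P) := by

  classical
  have haa : a ∈ ({a, a'} : Set (Fin m)) := by simp
  have haa' : a' ∈ ({a, a'} : Set (Fin m)) := by simp
  set c : ℝ := (F {ω | A ω = a}).toReal with hcdef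
  have hc : 0 < c := ENNReal.toReal_pos hFa.ne' (measure_ne_top F _)
  set d1 : Ω → ℝ := fun ω => πP a' (X ω) - πF a' (X ω) with hd1
  set d2 : Ω → ℝ := fun ω => πP a (X ω) - πF a (X ω) with hd2
  set g : Ω → ℝ := fun ω => μF (X ω) - μP (X ω) with hg
  set f : Ω → ℝ := fun ω => πF a (X ω) / c
      * (πP a' (X ω) / πF a' (X ω) - πP a (X ω) / πF a (X ω)) * g ω with hf
  have hεc : 0 < ε * c := mul_pos hε hc
  -- pointwise bound
  have key : ∀ ω, |f ω| ≤ (1 / (ε * c)) * ((|d1 ω| + |d2 ω|) * |g ω|) := by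
    intro ω
    obtain ⟨hua, hua1⟩ := hπFrange a haa (X ω)
    obtain ⟨hva, hva1⟩ := hπFrange a' haa' (X ω)
    have hu : 0 < πF a (X ω) := lt_of_lt_of_le hε hua
    have hv : 0 < πF a' (X ω) := lt_of_lt_of_le hε hva
    have hdiff : πP a' (X ω) / πF a' (X ω) - πP a (X ω) / πF a (X ω)
        = d1 ω / πF a' (X ω) - d2 ω / πF a (X ω) := by
      field_simp [hd1, hd2]
      ring
    have h3 : |πP a' (X ω) / πF a' (X ω) - πP a (X ω) / πF a (X ω)|
        ≤ (1 / ε) * (|d1 ω| + |d2 ω|) := by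
      rw [hdiff]
      calc |d1 ω / πF a' (X ω) - d2 ω / πF a (X ω)|
          ≤ |d1 ω / πF a' (X ω)| + |d2 ω / πF a (X ω)| := abs_sub _ _
        _ = |d1 ω| / πF a' (X ω) + |d2 ω| / πF a (X ω) := by
            rw [abs_div, abs_div, abs_of_pos hv, abs_of_pos hu]
        _ ≤ |d1 ω| / ε + |d2 ω| / ε := by
            gcongr <;> first | exact abs_nonneg _ | exact hva | exact hua
        _ = (1 / ε) * (|d1 ω| + |d2 ω|) := by ring
    have h2 : |πF a (X ω) / c| ≤ 1 / c := by
      rw [abs_div, abs_of_pos hc, abs_of_pos hu]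
      gcongr
    calc |f ω| = |πF a (X ω) / c|
          * |πP a' (X ω) / πF a' (X ω) - πP a (X ω) / πF a (X ω)| * |g ω| := by
          rw [hf, abs_mul, abs_mul]
      _ ≤ (1 / c) * ((1 / ε) * (|d1 ω| + |d2 ω|)) * |g ω| := by
          gcongr
          all_goals first | exact h2 | exact h3 | positivity
      _ = (1 / (ε * c)) * ((|d1 ω| + |d2 ω|) * |g ω|) := by ring
  -- measurability and integrability
  have hd1m : Measurable d1 := ((hπPmeas a' haa').comp hX).sub ((hπFmeas a' haa').comp hX)
  have hd2m : Measurable d2 := ((hπPmeas a haa).comp hX).sub ((hπFmeas a haa).comp hX)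
  have hgm : Measurable g := (hμFmeas.comp hX).sub (hμPmeas.comp hX)
  have hd1b : ∀ ω, |d1 ω| ≤ 2 := by
    intro ω
    have h1 := hπPrange a' haa' (X ω); have h2 := hπFrange a' haa' (X ω)
    rw [abs_le]; constructor <;> simp only [hd1] <;> nlinarith [hε.le]
  have hd2b : ∀ ω, |d2 ω| ≤ 2 := by
    intro ω
    have h1 := hπPrange a haa (X ω); have h2 := hπFrange a haa (X ω)
    rw [abs_le]; constructor <;> simp only [hd2] <;> nlinarith [hε.le]
  have hgb : ∀ ω, |g ω| ≤ 2 := by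
    intro ω
    have h1 := hμFrange (X ω); have h2 := hμPrange (X ω)
    rw [abs_le]; constructor <;> simp only [hg] <;> nlinarith
  have int_of_bdd : ∀ (h : Ω → ℝ), Measurable h → ∀ C : ℝ, (∀ ω, |h ω| ≤ C) →
      Integrable h P := by
    intro h hm C hb
    exact ⟨hm.aestronglyMeasurable,
      HasFiniteIntegral.of_bounded (C := C) (Filter.Eventually.of_forall hb)⟩
  have hfm : Measurable f := by
    apply Measurable.mul
    apply Measurable.mul
    · exact ((hπFmeas a haa).comp hX).div measurable_const
    · exact (((hπPmeas a' haa').comp hX).div ((hπFmeas a' haa').comp hX)).sub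
        (((hπPmeas a haa).comp hX).div ((hπFmeas a haa).comp hX))
    · exact hgm
  have hfint : Integrable f P := by
    refine int_of_bdd f hfm ((1 / (ε * c)) * ((2 + 2) * 2)) fun ω => ?_
    refine (key ω).trans ?_
    gcongr
    all_goals first | exact hd1b ω | exact hd2b ω | exact hgb ω | positivity
  have hRint : Integrable (fun ω => (1 / (ε * c)) * ((|d1 ω| + |d2 ω|) * |g ω|)) P := by
    refine Integrable.const_mul ?_ _
    exact Integrable.bdd_mul
      (int_of_bdd _ hgm.abs 2 (fun ω => by simpa [abs_abs] using hgb ω))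
      (hd1m.abs.add hd2m.abs).aestronglyMeasurable
      (c := 4) (Filter.Eventually.of_forall fun ω => by
        have := hd1b ω; have := hd2b ω
        rw [Real.norm_eq_abs, abs_of_nonneg (by positivity)]; linarith)
  have hint1 : Integrable (fun ω => |d1 ω| * |g ω|) P :=
    int_of_bdd _ (hd1m.abs.mul hgm.abs) 4 fun ω => by
      rw [abs_of_nonneg (by positivity)]
      calc |d1 ω| * |g ω| ≤ 2 * 2 := by
            exact mul_le_mul (hd1b ω) (hgb ω) (abs_nonneg _) (by norm_num)
        _ = 4 := by norm_num
  have hint2 : Integrable (fun ω => |d2 ω| * |g ω|) P :=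
    int_of_bdd _ (hd2m.abs.mul hgm.abs) 4 fun ω => by
      rw [abs_of_nonneg (by positivity)]
      calc |d2 ω| * |g ω| ≤ 2 * 2 := by
            exact mul_le_mul (hd2b ω) (hgb ω) (abs_nonneg _) (by norm_num)
        _ = 4 := by norm_num
  -- main chain
  have step1 : |∫ ω, f ω ∂P| ≤ ∫ ω, |f ω| ∂P := by
    simpa [Real.norm_eq_abs] using norm_integral_le_integral_norm (μ := P) f
  have step2 : ∫ ω, |f ω| ∂P ≤ ∫ ω, (1 / (ε * c)) * ((|d1 ω| + |d2 ω|) * |g ω|) ∂P :=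
    integral_mono hfint.abs hRint key
  have step3 : ∫ ω, (1 / (ε * c)) * ((|d1 ω| + |d2 ω|) * |g ω|) ∂P
      = (1 / (ε * c)) * ((∫ ω, |d1 ω| * |g ω| ∂P) + ∫ ω, |d2 ω| * |g ω| ∂P) := by
    rw [integral_const_mul]
    congr 1
    rw [← integral_add hint1 hint2]
    congr 1
    funext ω
    ring
  have cs1 := cs_aux P hd1m hgm hd1b hgb
  have cs2 := cs_aux P hd2m hgm hd2b hgb
  have final : (1 / (ε * c)) * ((∫ ω, |d1 ω| * |g ω| ∂P) + ∫ ω, |d2 ω| * |g ω| ∂P)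
      ≤ (1 / (ε * c))
        * (Real.sqrt (∫ ω, d1 ω ^ 2 ∂P) + Real.sqrt (∫ ω, d2 ω ^ 2 ∂P))
        * Real.sqrt (∫ ω, g ω ^ 2 ∂P) := by
    rw [mul_assoc, add_mul]
    gcongr
    all_goals first | exact cs1 | exact cs2 | positivity
  calc |∫ ω, f ω ∂P| ≤ ∫ ω, |f ω| ∂P := step1
    _ ≤ ∫ ω, (1 / (ε * c)) * ((|d1 ω| + |d2 ω|) * |g ω|) ∂P := step2
    _ = (1 / (ε * c)) * ((∫ ω, |d1 ω| * |g ω| ∂P) + ∫ ω, |d2 ω| * |g ω| ∂P) := step3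
    _ ≤ (1 / (ε * c))
        * (Real.sqrt (∫ ω, d1 ω ^ 2 ∂P) + Real.sqrt (∫ ω, d2 ω ^ 2 ∂P))
        * Real.sqrt (∫ ω, g ω ^ 2 ∂P) := final
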